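/- Let G and Ĝ be symmetric positive definite N×N matrices with Ĝ = H P⁻ Hᵀ + Λ, and let S ∈ R^{N×k} have full column rank. Then P⁻ Hᵀ S (Sᵀ Ĝ S)⁻¹ Sᵀ H P⁻ ⪯ P⁻ Hᵀ Ĝ⁻¹ H P⁻ in the Loewner order. That is, the covariance reduction achieved by conditioning on the projected data Sᵀy is dominated by the reduction from conditioning on the full data y; equivalently, the computation-aware posterior covariance dominates the exact Kalman posterior covariance. -/

import Mathlib

open Matrix

private lemma real_conjTranspose_eq_transpose {m n : ℕ} (A : Matrix (Fin m) (Fin n) ℝ) :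
    Aᴴ = Aᵀ := conjTranspose_eq_transpose_of_trivial A

/-- The covariance reduction from conditioning on the projected data is dominated
by that of conditioning on the full data:
`P⁻ Hᵀ S (Sᵀ Ĝ S)⁻¹ Sᵀ H P⁻ ⪯ P⁻ Hᵀ Ĝ⁻¹ H P⁻` in the Loewner order. -/
theorem projected_downdate_dominated {D N k : ℕ}
    (Pm : Matrix (Fin D) (Fin D) ℝ) (H : Matrix (Fin N) (Fin D) ℝ)
    (Λ Ghat : Matrix (Fin N) (Fin N) ℝ) (S : Matrix (Fin N) (Fin k) ℝ)
    (hPm : Pm.PosSemidef) (hΛ : Λ.PosDef)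
    (hS : LinearIndependent ℝ (fun j : Fin k => Sᵀ j))
    (hGhat : Ghat = H * Pm * Hᵀ + Λ) :
    (Pm * Hᵀ * Ghat⁻¹ * H * Pm -
      Pm * Hᵀ * S * (Sᵀ * Ghat * S)⁻¹ * Sᵀ * H * Pm).PosSemidef := by
  -- Ĝ is positive definite
  have hG : Ghat.PosDef := by
    rw [hGhat]
    exact Matrix.PosDef.posSemidef_add
      (by simpa [real_conjTranspose_eq_transpose] using hPm.mul_mul_conjTranspose_same H) hΛ
  have hGsd : Ghat.PosSemidef := hG.posSemidef
  -- R = square root of Ĝ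
  open scoped MatrixOrder in set R : Matrix (Fin N) (Fin N) ℝ := CFC.sqrt Ghat with hRdef
  have hRpsd : R.PosSemidef := open scoped MatrixOrder in (CFC.sqrt_nonneg Ghat).posSemidef
  have hRR : R * R = Ghat := open scoped MatrixOrder in CFC.sqrt_mul_sqrt_self Ghat hGsd.nonneg
  have hRsymm : Rᵀ = R := by
    have h : Rᴴ = R := hRpsd.isHermitian
    rwa [real_conjTranspose_eq_transpose] at h
  have hRdet : IsUnit R.det := by
    have h : R.det * R.det = Ghat.det := by rw [← det_mul, hRR]
    have hne : R.det ≠ 0 := by intro h0; nlinarith [hG.det_pos]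
    exact hne.isUnit
  -- S *ᵥ x ≠ 0 for x ≠ 0
  have hSmv : ∀ x : Fin k → ℝ, x ≠ 0 → S *ᵥ x ≠ 0 := by
    intro x hx hzero
    apply hx
    have h := Fintype.linearIndependent_iff.mp hS x ?_
    · funext j; exact h j
    · funext i
      have := congrFun hzero i
      simpa [mulVec, dotProduct, Finset.sum_apply, mul_comm] using this
  -- A = Sᵀ Ĝ S is positive definite
  have hA : (Sᵀ * Ghat * S).PosDef := by
    have h : (Sᴴ * Ghat * S).PosDef := by
      refine PosDef.of_dotProduct_mulVec_pos (isHermitian_conjTranspose_mul_mul S hG.isHermitian) fun x hx => ?_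
      have hx' : S *ᵥ x ≠ 0 := hSmv x hx
      simpa only [star_mulVec, dotProduct_mulVec, vecMul_vecMul, ← mulVec_mulVec] using
        hG.dotProduct_mulVec_pos hx'
    rwa [real_conjTranspose_eq_transpose] at h
  set A : Matrix (Fin k) (Fin k) ℝ := Sᵀ * Ghat * S with hAdef
  have hAdet : IsUnit A.det := (isUnit_iff_isUnit_det A).1 hA.isUnit
  have hAinvA : A⁻¹ * A = 1 := nonsing_inv_mul A hAdet
  have hAsymm : Aᵀ = A := by
    have h : Aᴴ = A := hA.isHermitian
    rwa [real_conjTranspose_eq_transpose] at h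
  have hAinvsymm : (A⁻¹)ᵀ = A⁻¹ := by rw [transpose_nonsing_inv, hAsymm]
  -- the projection P = (R S) A⁻¹ (R S)ᵀ
  set T : Matrix (Fin N) (Fin k) ℝ := R * S with hTdef
  have hTtrans : Tᵀ = Sᵀ * R := by rw [hTdef, transpose_mul, hRsymm]
  have hTT : Tᵀ * T = A := by
    rw [hTtrans, hTdef, hAdef, ← hRR]
    simp only [Matrix.mul_assoc]
  set P : Matrix (Fin N) (Fin N) ℝ := T * A⁻¹ * Tᵀ with hPdef
  have hPsymm : Pᵀ = P := by
    rw [hPdef, hTtrans, hTdef]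
    simp only [transpose_mul, transpose_transpose, hRsymm, hAinvsymm, Matrix.mul_assoc]
  have hPP : P * P = P := by
    have h1 : P * P = T * (A⁻¹ * ((Tᵀ * T) * (A⁻¹ * Tᵀ))) := by
      rw [hPdef]; simp only [Matrix.mul_assoc]
    rw [h1, hTT, ← Matrix.mul_assoc A⁻¹ A, hAinvA, Matrix.one_mul, hPdef]
    simp only [hTdef, Matrix.mul_assoc]
  -- 1 - P is positive semidefinite
  have hIP : (1 - P).PosSemidef := by
    have heq : 1 - P = (1 - P) * (1 - P)ᴴ := by
      rw [real_conjTranspose_eq_transpose, transpose_sub, transpose_one, hPsymm,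
        Matrix.sub_mul, Matrix.mul_sub, Matrix.mul_sub, hPP]
      simp only [Matrix.one_mul, Matrix.mul_one]
      abel
    rw [heq]
    exact posSemidef_self_mul_conjTranspose _
  -- X = Ĝ⁻¹ - S A⁻¹ Sᵀ is positive semidefinite
  have hRinv : R⁻¹ * R = 1 := nonsing_inv_mul R hRdet
  have hRinvR : R * R⁻¹ = 1 := mul_nonsing_inv R hRdet
  have hRinvsymm : (R⁻¹)ᵀ = R⁻¹ := by rw [transpose_nonsing_inv, hRsymm]
  have hGinv : Ghat⁻¹ = R⁻¹ * R⁻¹ := by rw [← hRR, Matrix.mul_inv_rev]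
  have hP' : R⁻¹ * P * R⁻¹ = S * A⁻¹ * Sᵀ := by
    rw [hPdef, hTtrans, hTdef]
    calc R⁻¹ * (R * S * A⁻¹ * (Sᵀ * R)) * R⁻¹
        = (R⁻¹ * R) * (S * (A⁻¹ * (Sᵀ * (R * R⁻¹)))) := by simp only [Matrix.mul_assoc]
      _ = S * A⁻¹ * Sᵀ := by
          rw [hRinv, hRinvR, Matrix.one_mul, Matrix.mul_one, Matrix.mul_assoc]
  have hX : (Ghat⁻¹ - S * A⁻¹ * Sᵀ).PosSemidef := by
    have hconj : (R⁻¹ * (1 - P) * (R⁻¹)ᴴ).PosSemidef := hIP.mul_mul_conjTranspose_same R⁻¹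
    have heq : R⁻¹ * (1 - P) * (R⁻¹)ᴴ = Ghat⁻¹ - S * A⁻¹ * Sᵀ := by
      rw [real_conjTranspose_eq_transpose, hRinvsymm, Matrix.mul_sub, Matrix.mul_one,
        Matrix.sub_mul, hP', hGinv]
    rwa [heq] at hconj
  -- conjugate by Pm Hᵀ
  have hfinal : ((Pm * Hᵀ) * (Ghat⁻¹ - S * A⁻¹ * Sᵀ) * (Pm * Hᵀ)ᴴ).PosSemidef :=
    hX.mul_mul_conjTranspose_same (Pm * Hᵀ)
  have hPmsymm : Pmᵀ = Pm := by
    have h : Pmᴴ = Pm := hPm.isHermitian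
    rwa [real_conjTranspose_eq_transpose] at h
  have heq : (Pm * Hᵀ) * (Ghat⁻¹ - S * A⁻¹ * Sᵀ) * (Pm * Hᵀ)ᴴ =
      Pm * Hᵀ * Ghat⁻¹ * H * Pm - Pm * Hᵀ * S * A⁻¹ * Sᵀ * H * Pm := by
    rw [real_conjTranspose_eq_transpose, transpose_mul, transpose_transpose, hPmsymm]
    simp only [Matrix.mul_sub, Matrix.sub_mul, Matrix.mul_assoc]
  rwa [heq] at hfinal
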